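/- Let μ be a probability measure on a measurable space X′, let κ be a Markov kernel from X′ to a measurable space Z, and let g be a probability measure on Z. Then the KL divergence of the mixture is bounded by the average KL divergence: D_KL( ∫ κ(·|x′) dμ(x′) ‖ g ) ≤ ∫ D_KL( κ(·|x′) ‖ g ) dμ(x′). -/

import Mathlib

open MeasureTheory ProbabilityTheory

/-- Kullback–Leibler divergence (real-valued; meaningful when `μ ≪ ν` and the
log-likelihood ratio is integrable, which is assumed where used). -/
noncomputable def klReal {X : Type*} [MeasurableSpace X] (μ ν : Measure X) : ℝ :=
  ∫ x, llr μ ν x ∂μ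

lemma aux_le {Z : Type*} [MeasurableSpace Z] (p ν g : Measure Z)
    [IsProbabilityMeasure p] [IsProbabilityMeasure ν] [IsProbabilityMeasure g]
    (hpg : p ≪ g) (hνg : ν ≪ g)
    (hpos : ∀ᵐ z ∂p, ν.rnDeriv g z ≠ 0)
    (h1 : Integrable (llr ν g) p) (h2 : Integrable (llr p g) p) :
    ∫ z, llr ν g z ∂p ≤ ∫ z, llr p g z ∂p := by
  set r : Z → ℝ := fun z => (ν.rnDeriv g z).toReal / (p.rnDeriv g z).toReal with hr_def
  have hr_meas : Measurable r :=
    (Measure.measurable_rnDeriv ν g).ennreal_toReal.div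
      (Measure.measurable_rnDeriv p g).ennreal_toReal
  have hr_nonneg : ∀ z, 0 ≤ r z := fun z =>
    div_nonneg ENNReal.toReal_nonneg ENNReal.toReal_nonneg
  have hae : ∀ᵐ z ∂p, llr ν g z - llr p g z ≤ r z - 1 := by
    filter_upwards [hpos, Measure.rnDeriv_pos hpg, hpg.ae_le (Measure.rnDeriv_lt_top p g),
      hpg.ae_le (Measure.rnDeriv_lt_top ν g)] with z hν0 hp0 hpt hνt
    have hνr : 0 < (ν.rnDeriv g z).toReal := ENNReal.toReal_pos hν0 hνt.ne
    have hpr : 0 < (p.rnDeriv g z).toReal := ENNReal.toReal_pos hp0.ne' hpt.ne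
    have hrpos : 0 < r z := div_pos hνr hpr
    have heq : llr ν g z - llr p g z = Real.log (r z) := by
      rw [llr, llr, ← Real.log_div hνr.ne' hpr.ne']
    rw [heq]
    exact Real.log_le_sub_one_of_pos hrpos
  have hlint : ∫⁻ z, ENNReal.ofReal (r z) ∂p ≤ 1 := by
    have hmul := lintegral_rnDeriv_mul hpg (f := fun z => ENNReal.ofReal (r z))
      hr_meas.ennreal_ofReal.aemeasurable
    rw [← hmul]
    refine le_trans (lintegral_mono_ae ?_) ((Measure.lintegral_rnDeriv_le (μ := ν) (ν := g)).trans ?_)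
    · filter_upwards [Measure.rnDeriv_lt_top p g] with z hpt
      by_cases hp0 : p.rnDeriv g z = 0
      · simp [hp0]
      by_cases hνt : ν.rnDeriv g z = ⊤
      · exact hνt ▸ le_top
      have hpr : 0 < (p.rnDeriv g z).toReal := ENNReal.toReal_pos hp0 hpt.ne
      have : ENNReal.ofReal (r z) = ν.rnDeriv g z / p.rnDeriv g z := by
        rw [hr_def, ENNReal.ofReal_div_of_pos hpr, ENNReal.ofReal_toReal hνt,
          ENNReal.ofReal_toReal hpt.ne]
      rw [this, mul_comm, ENNReal.div_mul_cancel hp0 hpt.ne]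
    · simp
  have hr_int : Integrable r p := by
    refine ⟨hr_meas.aestronglyMeasurable, ?_⟩
    rw [hasFiniteIntegral_iff_ofReal (Filter.Eventually.of_forall hr_nonneg)]
    exact lt_of_le_of_lt hlint ENNReal.one_lt_top
  have hint_r : ∫ z, r z ∂p ≤ 1 := by
    rw [integral_eq_lintegral_of_nonneg_ae (Filter.Eventually.of_forall hr_nonneg)
      hr_meas.aestronglyMeasurable]
    exact ENNReal.toReal_le_of_le_ofReal zero_le_one (by simpa using hlint)
  have h3 : ∫ z, (llr ν g z - llr p g z) ∂p ≤ ∫ z, (r z - 1) ∂p :=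
    integral_mono_ae (h1.sub h2) (hr_int.sub (integrable_const 1)) hae
  have h4 : ∫ z, (r z - 1) ∂p = ∫ z, r z ∂p - 1 := by
    rw [integral_sub hr_int (integrable_const 1), integral_const]
    simp
  have h5 : ∫ z, (llr ν g z - llr p g z) ∂p = ∫ z, llr ν g z ∂p - ∫ z, llr p g z ∂p :=
    integral_sub h1 h2
  linarith

/-- the KL divergence of a mixture is bounded by the average KL
divergence: for a probability measure `μ` on `X'`, a Markov kernel `κ : X' → Z` and a
probability measure `g` on `Z`,
`D_KL(∫ κ(·|x′) dμ(x′) ‖ g) ≤ ∫ D_KL(κ(·|x′) ‖ g) dμ(x′)`. -/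
theorem stmt_9 {X' Z : Type*} [MeasurableSpace X'] [MeasurableSpace Z]
    (μ : Measure X') [IsProbabilityMeasure μ]
    (κ : Kernel X' Z) [IsMarkovKernel κ]
    (g : Measure Z) [IsProbabilityMeasure g]
    -- the KL divergences appearing are well defined and the right-hand side is finite
    (hac : ∀ x', κ x' ≪ g)
    (hint : ∀ x', Integrable (llr (κ x') g) (κ x'))
    (hmixint : Integrable (llr (μ.bind (fun x' => κ x')) g) (μ.bind (fun x' => κ x')))
    (hout : Integrable (fun x' => klReal (κ x') g) μ) :
    klReal (μ.bind (fun x' => κ x')) g ≤ ∫ x', klReal (κ x') g ∂μ := by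
  set ν : Measure Z := μ.bind (fun x' => κ x') with hν_def
  haveI : IsProbabilityMeasure ν := by
    constructor
    rw [hν_def, Measure.bind_apply MeasurableSet.univ κ.measurable.aemeasurable]
    simp
  have hνg : ν ≪ g := by
    refine Measure.AbsolutelyContinuous.mk fun s hs hgs => ?_
    rw [hν_def, Measure.bind_apply hs κ.measurable.aemeasurable]
    have : ∀ x', κ x' s = 0 := fun x' => hac x' hgs
    simp [this]
  have h_snd : (μ ⊗ₘ κ).map Prod.snd = ν := by
    ext s hs
    rw [Measure.map_apply measurable_snd hs, Measure.compProd_apply (measurable_snd hs),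
      hν_def, Measure.bind_apply hs κ.measurable.aemeasurable]
    rfl
  have hf : Integrable (fun pz : X' × Z => llr ν g pz.2) (μ ⊗ₘ κ) := by
    have hmap : Integrable (llr ν g) ((μ ⊗ₘ κ).map Prod.snd) := by
      rw [h_snd]; exact hmixint
    exact (integrable_map_measure (stronglyMeasurable_llr ν g).aestronglyMeasurable
      measurable_snd.aemeasurable).mp hmap
  have gen : ∀ f : Z → ℝ, StronglyMeasurable f →
      Integrable (fun pz : X' × Z => f pz.2) (μ ⊗ₘ κ) →
      ∫ z, f z ∂ν = ∫ x', ∫ z, f z ∂(κ x') ∂μ := by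
    intro f hfm hfi
    rw [← h_snd, integral_map measurable_snd.aemeasurable hfm.aestronglyMeasurable,
      Measure.integral_compProd hfi]
  have step1 : klReal ν g = ∫ x', ∫ z, llr ν g z ∂(κ x') ∂μ :=
    gen _ (stronglyMeasurable_llr ν g) hf
  have hae_int : ∀ᵐ x' ∂μ, Integrable (llr ν g) (κ x') :=
    ((Measure.integrable_compProd_iff hf.aestronglyMeasurable).mp hf).1
  have hae_pos : ∀ᵐ x' ∂μ, ∀ᵐ z ∂(κ x'), ν.rnDeriv g z ≠ 0 := by
    set s : Set Z := {z | ν.rnDeriv g z = 0} with hs_def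
    have hs : MeasurableSet s := Measure.measurable_rnDeriv ν g (measurableSet_singleton 0)
    have hνs : ν s = 0 := by
      rw [← Measure.setLIntegral_rnDeriv hνg s]
      rw [setLIntegral_congr_fun hs (fun z hz => hz)]
      simp
    rw [hν_def, Measure.bind_apply hs κ.measurable.aemeasurable] at hνs
    have h0 : ∀ᵐ x' ∂μ, κ x' s = 0 := by
      have := (lintegral_eq_zero_iff (κ.measurable_coe hs)).mp hνs
      filter_upwards [this] with x' hx'
      exact hx'
    filter_upwards [h0] with x' hx'
    rw [ae_iff]
    simpa [hs_def] using hx'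
  have houter1 : Integrable (fun x' => ∫ z, llr ν g z ∂(κ x')) μ := by
    have h := hf
    rw [Measure.compProd] at h
    have h2 := h.integral_compProd
    simpa using h2
  show klReal ν g ≤ _
  rw [step1]
  refine integral_mono_ae houter1 hout ?_
  filter_upwards [hae_int, hae_pos] with x' hi hp
  exact aux_le (κ x') ν g (hac x') hνg hp hi (hint x')
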